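/- There exists a finite instance of the multi-hop broadcast game (a finite node set with circuitry powers and unicast powers) and an action profile a that minimizes the network power over all action profiles, such that a is not a Nash equilibrium when players' costs are given by the Shapley-value scheme: some player has a unilateral deviation that strictly decreases its Shapley-value cost while strictly increasing the network power. -/

import Mathlib

open Finset

variable {Q : Type*} [Fintype Q] [DecidableEq Q]

/-- The set of children of node `j` under action profile `a`
(the players are the nodes different from the source `S`). -/
def children (S : Q) (a : {i : Q // i ≠ S} → Q) (j : Q) :
    Finset {i : Q // i ≠ S} :=
  Finset.univ.filter (fun i => a i = j)

/-- Total power required at node `j` to serve the set `M` of children: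
circuitry power plus the largest unicast power, and `0` if `M` is empty. -/
noncomputable def nodePower (S : Q) (pc : Q → ℝ) (p : Q → Q → ℝ) (j : Q)
    (M : Finset {i : Q // i ≠ S}) : ℝ :=
  if h : M.Nonempty then pc j + M.sup' h (fun i => p i.1 j) else 0

/-- Network power: the sum of the node powers over all nodes. -/
noncomputable def netPower (S : Q) (pc : Q → ℝ) (p : Q → Q → ℝ)
    (a : {i : Q // i ≠ S} → Q) : ℝ :=
  ∑ j, nodePower S pc p j (children S a j)

/-- Marginal-contribution (MC) cost of player `i` at profile `a`. -/
noncomputable def mcCost (S : Q) (pc : Q → ℝ) (p : Q → Q → ℝ)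
    (a : {i : Q // i ≠ S} → Q) (i : {i : Q // i ≠ S}) : ℝ :=
  nodePower S pc p (a i) (children S a (a i)) -
    nodePower S pc p (a i) ((children S a (a i)).erase i)

/-- Shapley-value (SV) cost of player `i` at profile `a`: with
`0 = x_0 ≤ x_1 ≤ … ≤ x_m` the sorted circuitry-inclusive unicast powers
(`x_i = p^c_j + p_{i,j}`) of the `m` children of `i`'s parent `j`, the SV cost
of the `r`-th child is `∑_{n=1}^{r} (x_n − x_{n−1})/(m + 1 − n)`. -/
noncomputable def svCost (S : Q) (pc : Q → ℝ) (p : Q → Q → ℝ)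
    (a : {i : Q // i ≠ S} → Q) (i : {i : Q // i ≠ S}) : ℝ :=
  let j := a i
  let M := children S a j
  let w : {i : Q // i ≠ S} → ℝ := fun h => pc j + p h.1 j
  let l : List ℝ := (M.val.map w).sort (· ≤ ·)
  let x : ℕ → ℝ := fun n => if n = 0 then 0 else l.getD (n - 1) 0
  let r : ℕ := (M.filter (fun h => w h < w i)).card + 1
  ∑ n ∈ Finset.Icc 1 r, (x n - x (n - 1)) / ((M.card : ℝ) + 1 - n)

noncomputable def pc3 : Fin 3 → ℝ := ![4, 0, 0]

noncomputable def p3 : Fin 3 → Fin 3 → ℝ := fun i j =>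
  if i = 1 ∧ j = 2 then 4
  else if i = 2 ∧ j = 0 then 1
  else if i = 2 ∧ j = 1 then 3/2
  else 0

def i1 : {i : Fin 3 // i ≠ 0} := ⟨1, by decide⟩
def i2 : {i : Fin 3 // i ≠ 0} := ⟨2, by decide⟩

lemma univ3 : (Finset.univ : Finset {i : Fin 3 // i ≠ 0}) = {i1, i2} := by decide

lemma net_eval_00 (b : {i : Fin 3 // i ≠ 0} → Fin 3) (h1 : b i1 = 0) (h2 : b i2 = 0) :
    netPower 0 pc3 p3 b = 5 := by
  have c0 : children (0:Fin 3) b 0 = {i1, i2} := by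
    simp [children, univ3, Finset.filter_insert, Finset.filter_singleton, h1, h2]
  have c1 : children (0:Fin 3) b 1 = ∅ := by
    simp [children, univ3, Finset.filter_insert, Finset.filter_singleton, h1, h2]
  have c2 : children (0:Fin 3) b 2 = ∅ := by
    simp [children, univ3, Finset.filter_insert, Finset.filter_singleton, h1, h2]
  simp [netPower, Fin.sum_univ_three, c0, c1, c2, nodePower, Finset.sup'_insert, pc3, p3, i1, i2]
  norm_num

lemma sort_pair {x y : ℝ} (h : x ≤ y) :
    Multiset.sort ({x, y} : Multiset ℝ) (· ≤ ·) = [x, y] := by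
  have hco : ({x, y} : Multiset ℝ) = ↑[x, y] := rfl
  have hperm : List.Perm (Multiset.sort ({x, y} : Multiset ℝ) (· ≤ ·)) [x, y] := by
    rw [hco]
    exact Multiset.coe_eq_coe.mp (by rw [Multiset.sort_eq])
  exact List.Perm.eq_of_pairwise' (Multiset.pairwise_sort _ _)
    (by simp [List.pairwise_cons, h]) hperm

lemma sort_single (x : ℝ) :
    Multiset.sort ({x} : Multiset ℝ) (· ≤ ·) = [x] := by
  have hperm : List.Perm (Multiset.sort ({x} : Multiset ℝ) (· ≤ ·)) [x] := by
    exact Multiset.coe_eq_coe.mp (by rw [Multiset.sort_eq]; rfl)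
  exact List.Perm.eq_of_pairwise' (Multiset.pairwise_sort _ _) (by simp) hperm

lemma sv_a : svCost (0:Fin 3) pc3 p3 (fun _ => (0:Fin 3)) i2 = 3 := by
  have hc : children (0:Fin 3) (fun _ => (0:Fin 3)) 0 = {i1, i2} := by
    simp [children, univ3]
  have hval : ({i1, i2} : Finset {i : Fin 3 // i ≠ 0}).val = ({i1, i2} : Multiset _) := by
    decide
  have w1 : pc3 0 + p3 (i1.1) 0 = 4 := by norm_num [pc3, p3, i1, Fin.ext_iff]
  have w2 : pc3 0 + p3 (i2.1) 0 = 5 := by norm_num [pc3, p3, i2, Fin.ext_iff]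
  have hmap : Multiset.map (fun x : {i : Fin 3 // i ≠ 0} => pc3 0 + p3 x.1 0)
      ({i1, i2} : Multiset _) = {(4:ℝ), 5} := by
    simp only [Multiset.insert_eq_cons, Multiset.map_cons, Multiset.map_singleton, w1, w2]
  have hsort : Multiset.sort ({(4:ℝ), 5}) (fun x1 x2 : ℝ => x1 ≤ x2) = [4, 5] :=
    sort_pair (by norm_num)
  have hfilter : Finset.filter (fun h => pc3 0 + p3 (h.1) 0 < pc3 0 + p3 (i2.1) 0)
      ({i1, i2} : Finset _) = {i1} := by
    simp only [Finset.filter_insert, Finset.filter_singleton, w1, w2]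
    norm_num
  have hcard : ({i1, i2} : Finset {i : Fin 3 // i ≠ 0}).card = 2 := by decide
  simp only [svCost, hc, hval, hmap, hsort, hfilter, hcard, Finset.card_singleton]
  rw [show Finset.Icc 1 (1 + 1) = ({1, 2} : Finset ℕ) by decide]
  rw [Finset.sum_pair (by norm_num : (1:ℕ) ≠ 2)]
  norm_num [List.getD]

lemma mem_cases3 (m : {i : Fin 3 // i ≠ 0}) : m = i1 ∨ m = i2 := by
  revert m; decide

lemma net_eval_01 (b : {i : Fin 3 // i ≠ 0} → Fin 3) (h1 : b i1 = 0) (h2 : b i2 = 1) :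
    netPower 0 pc3 p3 b = 11/2 := by
  have c0 : children (0:Fin 3) b 0 = {i1} := by
    simp [children, univ3, Finset.filter_insert, Finset.filter_singleton, h1, h2]
  have c1 : children (0:Fin 3) b 1 = {i2} := by
    simp [children, univ3, Finset.filter_insert, Finset.filter_singleton, h1, h2]
  have c2 : children (0:Fin 3) b 2 = ∅ := by
    simp [children, univ3, Finset.filter_insert, Finset.filter_singleton, h1, h2]
  simp [netPower, Fin.sum_univ_three, c0, c1, c2, nodePower, pc3, p3, i1, i2]
  norm_num

lemma net_eval_20 (b : {i : Fin 3 // i ≠ 0} → Fin 3) (h1 : b i1 = 2) (h2 : b i2 = 0) :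
    netPower 0 pc3 p3 b = 9 := by
  have c0 : children (0:Fin 3) b 0 = {i2} := by
    simp [children, univ3, Finset.filter_insert, Finset.filter_singleton, h1, h2]
  have c1 : children (0:Fin 3) b 1 = ∅ := by
    simp [children, univ3, Finset.filter_insert, Finset.filter_singleton, h1, h2]
  have c2 : children (0:Fin 3) b 2 = {i1} := by
    simp [children, univ3, Finset.filter_insert, Finset.filter_singleton, h1, h2]
  simp [netPower, Fin.sum_univ_three, c0, c1, c2, nodePower, pc3, p3, i1, i2]
  norm_num

lemma net_eval_21 (b : {i : Fin 3 // i ≠ 0} → Fin 3) (h1 : b i1 = 2) (h2 : b i2 = 1) :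
    netPower 0 pc3 p3 b = 11/2 := by
  have c1 : children (0:Fin 3) b 1 = {i2} := by
    simp [children, univ3, Finset.filter_insert, Finset.filter_singleton, h1, h2]
  have c2 : children (0:Fin 3) b 2 = {i1} := by
    simp [children, univ3, Finset.filter_insert, Finset.filter_singleton, h1, h2]
  have c0 : children (0:Fin 3) b 0 = ∅ := by
    simp [children, univ3, Finset.filter_insert, Finset.filter_singleton, h1, h2]
  simp [netPower, Fin.sum_univ_three, c0, c1, c2, nodePower, pc3, p3, i1, i2]
  norm_num

lemma sv_a' (b : {i : Fin 3 // i ≠ 0} → Fin 3) (h1 : b i1 = 0) (h2 : b i2 = 1) :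
    svCost (0:Fin 3) pc3 p3 b i2 = 3/2 := by
  have hc : children (0:Fin 3) b 1 = {i2} := by
    simp [children, univ3, Finset.filter_insert, Finset.filter_singleton, h1, h2]
  have hval : ({i2} : Finset {i : Fin 3 // i ≠ 0}).val = ({i2} : Multiset _) := by decide
  have w2 : pc3 1 + p3 (i2.1) 1 = 3/2 := by norm_num [pc3, p3, i2, Fin.ext_iff]
  have hmap : Multiset.map (fun x : {i : Fin 3 // i ≠ 0} => pc3 1 + p3 x.1 1)
      ({i2} : Multiset _) = {(3/2 : ℝ)} := by
    simp only [Multiset.map_singleton, w2]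
  have hsort : Multiset.sort ({(3/2 : ℝ)}) (fun x1 x2 : ℝ => x1 ≤ x2) = [3/2] :=
    sort_single _
  have hfilter : Finset.filter (fun h => pc3 1 + p3 (h.1) 1 < pc3 1 + p3 (i2.1) 1)
      ({i2} : Finset _) = ∅ := by
    simp only [Finset.filter_singleton, w2]
    norm_num
  simp only [svCost, h2, hc, hval, hmap, hsort, hfilter, Finset.card_singleton,
    Finset.card_empty]
  rw [show Finset.Icc 1 (0 + 1) = ({1} : Finset ℕ) by decide]
  rw [Finset.sum_singleton]
  norm_num [List.getD]

/-- There is a finite instance of the multi-hop broadcast game and a profile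
minimizing the network power which is not a Nash equilibrium for the
Shapley-value scheme: some player has a unilateral deviation that strictly
decreases its SV cost while strictly increasing the network power. -/
theorem sv_optimum_not_nash :
    ∃ (n : ℕ) (S : Fin n) (pc : Fin n → ℝ) (p : Fin n → Fin n → ℝ)
      (a : {i : Fin n // i ≠ S} → Fin n),
      (∀ j, 0 ≤ pc j) ∧ (∀ i j, 0 ≤ p i j) ∧
      (∀ m, a m ≠ m.1) ∧
      (∀ b : {i : Fin n // i ≠ S} → Fin n, (∀ m, b m ≠ m.1) →
        netPower S pc p a ≤ netPower S pc p b) ∧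
      ∃ (i : {i : Fin n // i ≠ S}) (a' : {i : Fin n // i ≠ S} → Fin n),
        (∀ m, a' m ≠ m.1) ∧ (∀ m, m ≠ i → a' m = a m) ∧
        svCost S pc p a' i < svCost S pc p a i ∧
        netPower S pc p a' > netPower S pc p a := by
  refine ⟨3, 0, pc3, p3, fun _ => 0, ?_, ?_, ?_, ?_, ?_⟩
  · intro j; fin_cases j <;> norm_num [pc3]
  · intro i j; unfold p3; split_ifs <;> norm_num
  · intro m; exact Ne.symm m.2
  · intro b hb
    have ha : netPower (0:Fin 3) pc3 p3 (fun _ => 0) = 5 := net_eval_00 _ rfl rfl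
    have h1 : b i1 = 0 ∨ b i1 = 2 := by
      have key : ∀ v : Fin 3, v ≠ 1 → v = 0 ∨ v = 2 := by decide
      exact key _ (hb i1)
    have h2 : b i2 = 0 ∨ b i2 = 1 := by
      have key : ∀ v : Fin 3, v ≠ 2 → v = 0 ∨ v = 1 := by decide
      exact key _ (hb i2)
    rcases h1 with h1 | h1 <;> rcases h2 with h2 | h2
    · rw [ha, net_eval_00 b h1 h2]
    · rw [ha, net_eval_01 b h1 h2]; norm_num
    · rw [ha, net_eval_20 b h1 h2]; norm_num
    · rw [ha, net_eval_21 b h1 h2]; norm_num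
  · refine ⟨i2, fun m => if m = i2 then 1 else 0, ?_, ?_, ?_, ?_⟩
    · intro m
      rcases mem_cases3 m with rfl | rfl <;> decide
    · intro m hm
      rcases mem_cases3 m with rfl | rfl
      · simp [show i1 ≠ i2 by decide]
      · exact absurd rfl hm
    · rw [sv_a' _ (by decide) (by decide), sv_a]; norm_num
    · rw [net_eval_01 _ (by decide) (by decide), net_eval_00 _ rfl rfl]; norm_num
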